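/- If \tau(s,x,y) = det[a_{ij}(x,y)]_{m ≤ i,j ≤ s-1} where a(x,y) = exp(\sum_k x_k \Lambda^k) · A · exp(-\sum_k y_k (\Lambda^T)^k) for a constant matrix A, then \tau(s, x - \epsilon(\lambda), y) = det[(1 - \lambda \Lambda) a(x,y)]_{m ≤ i,j ≤ s-1}, where \epsilon(\lambda) = (\lambda, \lambda^2/2, \lambda^3/3, ...) and \Lambda is the upper shift matrix. -/

import Mathlib

open Finset

/-- The upper shift matrix `Λ` with `Λ_{k,k+1} = 1`. -/
def shiftU (d : ℕ) : Matrix (Fin d) (Fin d) ℂ :=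
  Matrix.of fun i j => if (i : ℕ) + 1 = (j : ℕ) then 1 else 0

/-- `a(x,y) = exp(∑_k x_k Λ^k) · A · exp(-∑_k y_k (Λᵀ)^k)`, the time-evolved matrix of
the initial value problem (the times are `x_1, …, x_{d-1}`, `y_1, …, y_{d-1}`). -/
noncomputable def amat (d : ℕ) (A : Matrix (Fin d) (Fin d) ℂ) (x y : ℕ → ℂ) :
    Matrix (Fin d) (Fin d) ℂ :=
  NormedSpace.exp (∑ k ∈ Finset.Icc 1 (d - 1), x k • (shiftU d) ^ k) * A *
    NormedSpace.exp (-∑ k ∈ Finset.Icc 1 (d - 1), y k • ((shiftU d).transpose) ^ k)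

/- ### Auxiliary lemmas -/

lemma shiftU_pow_apply (d k : ℕ) (i j : Fin d) :
    (shiftU d ^ k) i j = if (i : ℕ) + k = (j : ℕ) then 1 else 0 := by
  induction k generalizing j with
  | zero => simp [Matrix.one_apply, Fin.ext_iff]
  | succ k ih =>
    rw [pow_succ, Matrix.mul_apply]
    rcases lt_or_ge ((i : ℕ) + k) d with h | h
    · rw [Finset.sum_eq_single (⟨(i : ℕ) + k, h⟩ : Fin d)]
      · rw [ih]
        simp [shiftU, Nat.add_assoc]
      · intro b _ hb
        rw [ih, if_neg (fun hc => hb (Fin.ext hc.symm)), zero_mul]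
      · intro h'; exact absurd (Finset.mem_univ _) h'
    · rw [Finset.sum_eq_zero, eq_comm, if_neg]
      · have := j.isLt; omega
      · intro b _
        rw [ih, if_neg (by have := b.isLt; omega), zero_mul]

lemma shiftU_pow_d (d : ℕ) : shiftU d ^ d = 0 := by
  ext i j
  rw [shiftU_pow_apply, if_neg (by have := j.isLt; omega)]
  simp

/-- Polynomials (with ℂ-coefficients) in `shiftU d` commute. -/
lemma commute_sums (d : ℕ) (c b : ℕ → ℂ) (S T : Finset ℕ) :
    Commute (∑ k ∈ S, c k • shiftU d ^ k) (∑ k ∈ T, b k • shiftU d ^ k) := by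
  refine Commute.sum_left _ _ _ fun k _ => ?_
  refine Commute.sum_right _ _ _ fun m _ => ?_
  exact (((Commute.refl (shiftU d)).pow_pow k m).smul_left (c k)).smul_right (b m)

/-- Derivative of `exp ∘ g` when `g` has commuting values. -/
lemma hasDerivAt_exp_of_commute {𝔸 : Type*} [NormedRing 𝔸] [NormedAlgebra ℂ 𝔸]
    [CompleteSpace 𝔸] {g : ℂ → 𝔸} {g' : 𝔸} {t : ℂ} (hg : HasDerivAt g g' t)
    (hc : ∀ s, Commute (g s) (g t)) :
    HasDerivAt (fun s => NormedSpace.exp (g s)) (g' * NormedSpace.exp (g t)) t := by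
  letI : NormedAlgebra ℚ 𝔸 := NormedAlgebra.restrictScalars ℚ ℂ 𝔸
  have key : ∀ s, NormedSpace.exp (g s)
      = NormedSpace.exp (g s - g t) * NormedSpace.exp (g t) := by
    intro s
    rw [← NormedSpace.exp_add_of_commute ((hc s).sub_left (Commute.refl (g t))), sub_add_cancel]
  have h0 : HasFDerivAt NormedSpace.exp (1 : 𝔸 →L[ℂ] 𝔸) (g t - g t) := by
    rw [sub_self]; exact hasFDerivAt_exp_zero
  have h1 : HasDerivAt (fun s => NormedSpace.exp (g s - g t)) g' t := by
    have h2 := h0.comp_hasDerivAt t (hg.sub_const (g t))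
    simpa [Function.comp_def] using h2
  have h3 := h1.mul_const (NormedSpace.exp (g t))
  have heq : (fun s => NormedSpace.exp (g s))
      = fun s => NormedSpace.exp (g s - g t) * NormedSpace.exp (g t) := funext key
  rw [heq]
  exact h3

/-- The matrix `-ε(λ)`-flow exponent. -/
noncomputable def Sfun (d : ℕ) (t : ℂ) : Matrix (Fin d) (Fin d) ℂ :=
  ∑ k ∈ Finset.Icc 1 (d - 1), (t ^ k / (k : ℂ)) • shiftU d ^ k

/-- Key identity: `exp(-∑_{k=1}^{d-1} (λ^k/k) Λ^k) = 1 - λ Λ`. -/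
lemma exp_neg_Sfun (d : ℕ) (l : ℂ) :
    NormedSpace.exp (-Sfun d l) = 1 - l • shiftU d := by
  letI : SeminormedRing (Matrix (Fin d) (Fin d) ℂ) := Matrix.linftyOpSemiNormedRing
  letI : NormedRing (Matrix (Fin d) (Fin d) ℂ) := Matrix.linftyOpNormedRing
  letI : NormedAlgebra ℂ (Matrix (Fin d) (Fin d) ℂ) := Matrix.linftyOpNormedAlgebra
  letI : NormedAlgebra ℚ (Matrix (Fin d) (Fin d) ℂ) :=
    NormedAlgebra.restrictScalars ℚ ℂ (Matrix (Fin d) (Fin d) ℂ)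
  rcases Nat.eq_zero_or_pos d with rfl | hd
  · ext i j; exact i.elim0
  set Λ := shiftU d with hΛ
  have hcomm : ∀ s t : ℂ, Commute (Sfun d s) (Sfun d t) := fun s t =>
    commute_sums d _ _ _ _
  -- derivative of the exponent
  have hS' : ∀ t : ℂ, HasDerivAt (Sfun d)
      (∑ k ∈ Finset.Icc 1 (d - 1), t ^ (k - 1) • Λ ^ k) t := by
    intro t
    apply HasDerivAt.fun_sum
    intro k hk
    have hk1 : 1 ≤ k := (Finset.mem_Icc.mp hk).1
    have hknz : (k : ℂ) ≠ 0 := Nat.cast_ne_zero.mpr (by omega)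
    have h := ((hasDerivAt_pow k t).div_const (k : ℂ)).smul_const (Λ ^ k)
    have hcoe : ((k : ℂ) * t ^ (k - 1)) / (k : ℂ) = t ^ (k - 1) := by
      field_simp
    rw [hcoe] at h
    exact h
  -- telescoping identity
  have htel : ∀ t : ℂ,
      (∑ k ∈ Finset.Icc 1 (d - 1), t ^ (k - 1) • Λ ^ k) * (1 - t • Λ) = Λ := by
    intro t
    have expand : (∑ k ∈ Finset.Icc 1 (d - 1), t ^ (k - 1) • Λ ^ k) * (1 - t • Λ)
        = ∑ k ∈ Finset.Icc 1 (d - 1), (t ^ (k - 1) • Λ ^ k - t ^ k • Λ ^ (k + 1)) := by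
      rw [Finset.sum_mul]
      refine Finset.sum_congr rfl fun k hk => ?_
      have hk1 : 1 ≤ k := (Finset.mem_Icc.mp hk).1
      rw [mul_sub, mul_one]
      congr 1
      rw [smul_mul_smul_comm, ← pow_succ, ← pow_succ]
      congr 2
      omega
    rw [expand]
    have hIcc : Finset.Icc 1 (d - 1) = Finset.Ico 1 d := by
      rw [← Finset.Ico_add_one_right_eq_Icc]
      congr 1
      omega
    rw [hIcc, Finset.sum_Ico_eq_sum_range]
    have hterm : ∀ i, t ^ (1 + i - 1) • Λ ^ (1 + i) - t ^ (1 + i) • Λ ^ (1 + i + 1)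
        = (fun j => t ^ j • Λ ^ (j + 1)) i - (fun j => t ^ j • Λ ^ (j + 1)) (i + 1) := by
      intro i
      simp only
      have e1 : 1 + i - 1 = i := by omega
      have e2 : 1 + i = i + 1 := by omega
      have e3 : 1 + i + 1 = i + 1 + 1 := by omega
      rw [e1, e3, e2]
    rw [Finset.sum_congr rfl fun i _ => hterm i,
      Finset.sum_range_sub' (fun j => t ^ j • Λ ^ (j + 1))]
    have hd1 : d - 1 + 1 = d := by omega
    rw [hd1, shiftU_pow_d, smul_zero, sub_zero, pow_zero, pow_one, one_smul]
  -- the auxiliary function is constant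
  have hf' : ∀ t : ℂ, HasDerivAt
      (fun t : ℂ => NormedSpace.exp (Sfun d t) * (1 - t • Λ)) 0 t := by
    intro t
    have hA := hasDerivAt_exp_of_commute (hS' t) (fun s => hcomm s t)
    have hB : HasDerivAt (fun s : ℂ => 1 - s • Λ) (-((1 : ℂ) • Λ)) t :=
      ((hasDerivAt_id t).smul_const Λ).const_sub 1
    have hAB := hA.mul hB
    convert hAB using 1
    · rfl
    · rfl
    · rfl
    · rfl
    have hDcomm : Commute (∑ k ∈ Finset.Icc 1 (d - 1), t ^ (k - 1) • Λ ^ k)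
        (NormedSpace.exp (Sfun d t)) :=
      (commute_sums d _ _ _ _).exp_right
    rw [one_smul]
    erw [hDcomm.eq, mul_assoc, htel t, mul_neg]
    erw [add_neg_cancel]
  have hconst : NormedSpace.exp (Sfun d l) * (1 - l • Λ)
      = NormedSpace.exp (Sfun d 0) * (1 - (0 : ℂ) • Λ) :=
    is_const_of_deriv_eq_zero (fun t => (hf' t).differentiableAt)
      (fun t => (hf' t).deriv) l 0
  have hS0 : Sfun d 0 = 0 := by
    refine Finset.sum_eq_zero fun k hk => ?_
    have hk1 : 1 ≤ k := (Finset.mem_Icc.mp hk).1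
    rw [zero_pow (by omega : k ≠ 0), zero_div, zero_smul]
  have hkey : NormedSpace.exp (Sfun d l) * (1 - l • Λ) = 1 := by
    rw [hconst, hS0, NormedSpace.exp_zero, zero_smul, sub_zero, one_mul]
  have hinv : NormedSpace.exp (-Sfun d l) * NormedSpace.exp (Sfun d l) = 1 := by
    erw [← NormedSpace.exp_add_of_commute ((Commute.refl (Sfun d l)).neg_left),
      neg_add_cancel, NormedSpace.exp_zero]
  calc NormedSpace.exp (-Sfun d l)
      = NormedSpace.exp (-Sfun d l) * (NormedSpace.exp (Sfun d l) * (1 - l • Λ)) := by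
        rw [hkey, mul_one]
    _ = (NormedSpace.exp (-Sfun d l) * NormedSpace.exp (Sfun d l)) * (1 - l • Λ) := by
        rw [mul_assoc]
    _ = 1 - l • Λ := by rw [hinv, one_mul]

lemma exp_shift (d : ℕ) (x : ℕ → ℂ) (l : ℂ) :
    NormedSpace.exp (∑ k ∈ Finset.Icc 1 (d - 1), (x k - l ^ k / (k : ℂ)) • shiftU d ^ k)
      = (1 - l • shiftU d)
        * NormedSpace.exp (∑ k ∈ Finset.Icc 1 (d - 1), x k • shiftU d ^ k) := by
  letI : SeminormedRing (Matrix (Fin d) (Fin d) ℂ) := Matrix.linftyOpSemiNormedRing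
  letI : NormedRing (Matrix (Fin d) (Fin d) ℂ) := Matrix.linftyOpNormedRing
  letI : NormedAlgebra ℂ (Matrix (Fin d) (Fin d) ℂ) := Matrix.linftyOpNormedAlgebra
  letI : NormedAlgebra ℚ (Matrix (Fin d) (Fin d) ℂ) :=
    NormedAlgebra.restrictScalars ℚ ℂ (Matrix (Fin d) (Fin d) ℂ)
  have hsplit : (∑ k ∈ Finset.Icc 1 (d - 1), (x k - l ^ k / (k : ℂ)) • shiftU d ^ k)
      = (-Sfun d l) + ∑ k ∈ Finset.Icc 1 (d - 1), x k • shiftU d ^ k := by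
    unfold Sfun
    simp only [sub_smul, Finset.sum_sub_distrib]
    rw [sub_eq_neg_add]
  have hcomm : Commute (-Sfun d l) (∑ k ∈ Finset.Icc 1 (d - 1), x k • shiftU d ^ k) := by
    unfold Sfun
    exact (commute_sums d _ _ _ _).neg_left
  rw [hsplit]
  erw [NormedSpace.exp_add_of_commute hcomm]
  erw [exp_neg_Sfun]
  rfl

/-- With `τ(s,x,y) = det[a_{ij}(x,y)]` over the leading `s × s` block,
the Miwa shift `x ↦ x - ε(λ)`, `ε(λ) = (λ, λ²/2, λ³/3, …)`, gives
`τ(s, x - ε(λ), y) = det[(1 - λΛ)·a(x,y)]` over the same block. -/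
theorem tau_miwa_shift (d s : ℕ) (hs : s ≤ d) (A : Matrix (Fin d) (Fin d) ℂ)
    (x y : ℕ → ℂ) (l : ℂ) :
    Matrix.det (fun i j : Fin s =>
        amat d A (fun k => x k - l ^ k / (k : ℂ)) y (Fin.castLE hs i) (Fin.castLE hs j)) =
    Matrix.det (fun i j : Fin s =>
        ((1 - l • shiftU d) * amat d A x y) (Fin.castLE hs i) (Fin.castLE hs j)) := by
  have hmat : amat d A (fun k => x k - l ^ k / (k : ℂ)) y
      = (1 - l • shiftU d) * amat d A x y := by
    unfold amat
    rw [exp_shift d x l, mul_assoc, mul_assoc, mul_assoc]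
  rw [hmat]
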